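/- If R is a finite local commutative ring with unity and maximal ideal m, then the projective line over R has exactly |R| + |m| points. -/

import Mathlib

def Admissible {R : Type*} [CommRing R] (p : R × R) : Prop :=
  ∃ M : Matrix (Fin 2) (Fin 2) R, IsUnit M ∧ M 0 0 = p.1 ∧ M 0 1 = p.2

def PairRel {R : Type*} [CommRing R] (p q : {p : R × R // Admissible p}) : Prop :=
  ∃ u : Rˣ, q.1 = ((u : R) * p.1.1, (u : R) * p.1.2)

/-- The projective line over `R`: unit-orbit classes of admissible pairs. -/
def PL (R : Type*) [CommRing R] : Type _ := Quot (@PairRel R _)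

def PL.mk {R : Type*} [CommRing R] (p : R × R) (h : Admissible p) : PL R :=
  Quot.mk _ ⟨p, h⟩

/-- `x` is a zero-divisor (counting `0` as a zero-divisor). -/
def IsZD {R : Type*} [CommRing R] (x : R) : Prop :=
  x = 0 ∨ ∃ y : R, y ≠ 0 ∧ x * y = 0

/-- A point is of type I if some representative has a unit entry. -/
def TypeI {R : Type*} [CommRing R] (X : PL R) : Prop :=
  ∃ p h, PL.mk p h = X ∧ (IsUnit p.1 ∨ IsUnit p.2)

/-- A point is of type II if every representative has both coordinates zero-divisors. -/
def TypeII {R : Type*} [CommRing R] (X : PL R) : Prop :=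
  ∀ p h, PL.mk p h = X → IsZD p.1 ∧ IsZD p.2

/-- Neighbour relation: the determinant of representatives is a non-unit. -/
def Nbr {R : Type*} [CommRing R] (X Y : PL R) : Prop :=
  ∃ p q hp hq, X = PL.mk p hp ∧ Y = PL.mk q hq ∧ ¬ IsUnit (p.1 * q.2 - p.2 * q.1)

/-- Neighbour relation phrased via zero-divisors. -/
def NbrZD {R : Type*} [CommRing R] (X Y : PL R) : Prop :=
  ∃ p q hp hq, X = PL.mk p hp ∧ Y = PL.mk q hq ∧ IsZD (p.1 * q.2 - p.2 * q.1)

/-- Distant relation: the determinant of representatives is a unit. -/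
def Distant {R : Type*} [CommRing R] (X Y : PL R) : Prop :=
  ∃ p q hp hq, X = PL.mk p hp ∧ Y = PL.mk q hq ∧ IsUnit (p.1 * q.2 - p.2 * q.1)

lemma adm {R : Type*} [CommRing R] (a b c d : R) (h : IsUnit (a * d - b * c)) :
    Admissible (a, b) :=
  ⟨!![a, b; c, d], (Matrix.isUnit_iff_isUnit_det _).2
    (by simpa [Matrix.det_fin_two_of] using h), rfl, rfl⟩

def ptU (R : Type*) [CommRing R] : PL R :=
  PL.mk (1, 0) (adm 1 0 0 1 (by simpa using isUnit_one))

def ptV (R : Type*) [CommRing R] : PL R :=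
  PL.mk (0, 1) (adm 0 1 1 0 (by simpa using (isUnit_one (M := R)).neg))

def ptW (R : Type*) [CommRing R] : PL R :=
  PL.mk (1, 1) (adm 1 1 0 1 (by simpa using isUnit_one))


section Aux

variable {R : Type*} [CommRing R]

lemma pairRel_equiv : Equivalence (@PairRel R _) := by
  constructor
  · intro p; exact ⟨1, by simp⟩
  · rintro p q ⟨u, h⟩
    refine ⟨u⁻¹, ?_⟩
    have h1 : q.1.1 = (u : R) * p.1.1 := by rw [h]
    have h2 : q.1.2 = (u : R) * p.1.2 := by rw [h]
    ext <;> simp [h1, h2]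
  · rintro p q r ⟨u, h⟩ ⟨v, h'⟩
    refine ⟨v * u, ?_⟩
    have h1 : q.1.1 = (u : R) * p.1.1 := by rw [h]
    have h2 : q.1.2 = (u : R) * p.1.2 := by rw [h]
    ext <;> simp [h', h1, h2, mul_assoc]

lemma mk_eq_iff {p q : R × R} (hp : Admissible p) (hq : Admissible q) :
    PL.mk p hp = PL.mk q hq ↔ PairRel ⟨p, hp⟩ ⟨q, hq⟩ := by
  change Quot.mk (@PairRel R _) ⟨p, hp⟩ = Quot.mk _ ⟨q, hq⟩ ↔ _
  rw [Quot.eq]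
  exact pairRel_equiv.eqvGen_iff

lemma unit_coord [IsLocalRing R] {p : R × R} (hp : Admissible p) :
    IsUnit p.1 ∨ IsUnit p.2 := by
  obtain ⟨M, hM, h1, h2⟩ := hp
  have hdet : IsUnit (p.1 * M 1 1 - p.2 * M 1 0) := by
    rw [← h1, ← h2, ← Matrix.det_fin_two]
    exact (Matrix.isUnit_iff_isUnit_det M).1 hM
  by_contra hc
  push_neg at hc
  obtain ⟨hx, hy⟩ := hc
  have : p.1 * M 1 1 - p.2 * M 1 0 ∈ IsLocalRing.maximalIdeal R :=
    Submodule.sub_mem _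
      (Ideal.mul_mem_right _ _ ((IsLocalRing.mem_maximalIdeal _).2 (mem_nonunits_iff.2 hx)))
      (Ideal.mul_mem_right _ _ ((IsLocalRing.mem_maximalIdeal _).2 (mem_nonunits_iff.2 hy)))
  exact mem_nonunits_iff.1 ((IsLocalRing.mem_maximalIdeal _).1 this) hdet

noncomputable def plEquiv (R : Type*) [CommRing R] [IsLocalRing R] :
    PL R ≃ R ⊕ (IsLocalRing.maximalIdeal R) := by
  refine (Equiv.ofBijective
    (fun z => Sum.elim
      (fun b => PL.mk (1, b) (adm 1 b 0 1 (by simpa using isUnit_one)))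
      (fun a : IsLocalRing.maximalIdeal R => PL.mk ((a : R), 1) (adm (a : R) 1 (-1) 0 (by simpa using isUnit_one))) z)
    ⟨?_, ?_⟩).symm
  · rintro (b | a) (b' | a') h <;> dsimp only [Sum.elim_inl, Sum.elim_inr] at h
    · rw [mk_eq_iff] at h
      obtain ⟨u, hu⟩ := h
      have h1 : (1 : R) = (u : R) * 1 := congrArg Prod.fst hu
      have h2 : b' = (u : R) * b := congrArg Prod.snd hu
      simp only [mul_one] at h1
      rw [h2, ← h1, one_mul]
    · rw [mk_eq_iff] at h
      obtain ⟨u, hu⟩ := h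
      have h1 : (a' : R) = (u : R) * 1 := congrArg Prod.fst hu
      simp only [mul_one] at h1
      exact absurd (h1 ▸ u.isUnit)
        (mem_nonunits_iff.1 ((IsLocalRing.mem_maximalIdeal _).1 a'.2))
    · rw [mk_eq_iff] at h
      obtain ⟨u, hu⟩ := h
      have h1 : (1 : R) = (u : R) * a := congrArg Prod.fst hu
      exact absurd (IsUnit.of_mul_eq_one (a := (a : R)) (u : R) (by rw [mul_comm]; exact h1.symm))
        (mem_nonunits_iff.1 ((IsLocalRing.mem_maximalIdeal _).1 a.2))
    · rw [mk_eq_iff] at h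
      obtain ⟨u, hu⟩ := h
      have h2 : (1 : R) = (u : R) * 1 := congrArg Prod.snd hu
      have h1 : (a' : R) = (u : R) * a := congrArg Prod.fst hu
      simp only [mul_one] at h2
      have : (a' : R) = (a : R) := by rw [h1, ← h2, one_mul]
      simp [Subtype.ext this]
  · intro X
    obtain ⟨⟨⟨x, y⟩, hxy⟩⟩ := X
    rcases unit_coord hxy with hx | hy
    · obtain ⟨u, hu⟩ := hx
      have hu' : (u : R) = x := hu
      refine ⟨Sum.inl (((u⁻¹ : Rˣ) : R) * y), ?_⟩
      simp only [Sum.elim_inl]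
      rw [show Quot.mk _ (⟨(x, y), hxy⟩ : {p : R × R // Admissible p}) =
        PL.mk (x, y) hxy from rfl, mk_eq_iff]
      exact ⟨u, by ext <;> simp [← hu']⟩
    · obtain ⟨u, hu⟩ := hy
      have hu' : (u : R) = y := hu
      by_cases hx : IsUnit x
      · obtain ⟨v, hv⟩ := hx
        have hv' : (v : R) = x := hv
        refine ⟨Sum.inl (((v⁻¹ : Rˣ) : R) * y), ?_⟩
        simp only [Sum.elim_inl]
        rw [show Quot.mk _ (⟨(x, y), hxy⟩ : {p : R × R // Admissible p}) =
          PL.mk (x, y) hxy from rfl, mk_eq_iff]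
        exact ⟨v, by ext <;> simp [← hv']⟩
      · have hmem : ((u⁻¹ : Rˣ) : R) * x ∈ IsLocalRing.maximalIdeal R := by
          rw [IsLocalRing.mem_maximalIdeal _, mem_nonunits_iff]
          intro h
          exact hx (by simpa using u.isUnit.mul h)
        refine ⟨Sum.inr ⟨((u⁻¹ : Rˣ) : R) * x, hmem⟩, ?_⟩
        simp only [Sum.elim_inr]
        rw [show Quot.mk _ (⟨(x, y), hxy⟩ : {p : R × R // Admissible p}) =
          PL.mk (x, y) hxy from rfl, mk_eq_iff]
        exact ⟨u, by ext <;> simp [← hu']⟩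

end Aux

abbrev R4 : Type := ZMod 4 × ZMod 4

theorem stmt5 {R : Type*} [CommRing R] [Fintype R] [IsLocalRing R] :
    Nat.card (PL R) = Fintype.card R + Nat.card (IsLocalRing.maximalIdeal R) := by
  rw [Nat.card_congr (plEquiv R), Nat.card_sum, Nat.card_eq_fintype_card]
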